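/- Let V be the ℂ-vector space with basis {e_k : k ∈ ℤ}, let π₊ and π₋ denote the projections of V onto the spans of {e_k : k ≥ 0} and {e_k : k < 0} respectively, and for an integer j let ρ_j(L_m) ∈ End(V) be given by ρ_j(L_m)(e_k) = −(k + j(m+1)) e_{k+m}. With the Japanese cocycle η(F,G) := Σ_{k<0} [ (coefficient of e_k in (π₋ ∘ F ∘ π₊ ∘ G)(e_k)) − (coefficient of e_k in (π₋ ∘ G ∘ π₊ ∘ F)(e_k)) ] (a finitely supported sum for these operators), the pullbacks of η along the representations ρ_j satisfy, for all integers j, m, n: η(ρ_j(L_m), ρ_j(L_n)) = (6j² − 6j + 1) · η(ρ_1(L_m), ρ_1(L_n)). -/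
import Mathlib


/-- The intermediate-series operator `ρ_j(L_m)` on the `ℂ`-vector space with basis
`{e_k : k ∈ ℤ}` (modeled as `ℤ →₀ ℂ`, `e_k = Finsupp.single k 1`):
`ρ_j(L_m)(e_k) = −(k + j(m+1))·e_{k+m}`. -/
noncomputable def rho (j m : ℤ) : (ℤ →₀ ℂ) →ₗ[ℂ] (ℤ →₀ ℂ) :=
  Finsupp.lsum ℂ fun k => (-((k : ℂ) + (j : ℂ) * ((m : ℂ) + 1))) • Finsupp.lsingle (k + m)

/-- The projection `π₊` of `ℤ →₀ ℂ` onto the span of `{e_k : k ≥ 0}`. -/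
noncomputable def piPlus : (ℤ →₀ ℂ) →ₗ[ℂ] (ℤ →₀ ℂ) :=
  Finsupp.lsum ℂ fun k => if 0 ≤ k then Finsupp.lsingle k else 0

/-- The projection `π₋` of `ℤ →₀ ℂ` onto the span of `{e_k : k < 0}`. -/
noncomputable def piMinus : (ℤ →₀ ℂ) →ₗ[ℂ] (ℤ →₀ ℂ) :=
  Finsupp.lsum ℂ fun k => if k < 0 then Finsupp.lsingle k else 0

/-- The `k`-th diagonal entry (for `k < 0`) of `F^{−+}G^{+−} − G^{−+}F^{+−}`:
the coefficient of `e_k` in `(π₋ ∘ F ∘ π₊ ∘ G)(e_k) − (π₋ ∘ G ∘ π₊ ∘ F)(e_k)`. -/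
noncomputable def etaSummand (F G : (ℤ →₀ ℂ) →ₗ[ℂ] (ℤ →₀ ℂ)) (k : ℤ) : ℂ :=
  if k < 0 then
    ((piMinus ∘ₗ F ∘ₗ piPlus ∘ₗ G) (Finsupp.single k 1)) k -
      ((piMinus ∘ₗ G ∘ₗ piPlus ∘ₗ F) (Finsupp.single k 1)) k
  else 0

/-- The Japanese cocycle `η(F,G) = tr(F^{−+}G^{+−} − G^{−+}F^{+−})`, as a sum over `k < 0`
of diagonal matrix entries. -/
noncomputable def eta (F G : (ℤ →₀ ℂ) →ₗ[ℂ] (ℤ →₀ ℂ)) : ℂ :=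
  ∑ᶠ k : ℤ, etaSummand F G k

lemma rho_single (j m k : ℤ) :
    rho j m (Finsupp.single k 1) =
      (-((k : ℂ) + (j : ℂ) * ((m : ℂ) + 1))) • Finsupp.single (k + m) 1 := by
  rw [rho, Finsupp.lsum_single]
  simp only [LinearMap.smul_apply, Finsupp.lsingle_apply]

lemma piPlus_single (k : ℤ) (c : ℂ) :
    piPlus (Finsupp.single k c) = if 0 ≤ k then Finsupp.single k c else 0 := by
  rw [piPlus, Finsupp.lsum_single]
  by_cases h : 0 ≤ k <;> simp only [h, if_true, if_false, Finsupp.lsingle_apply,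
    LinearMap.zero_apply]

lemma piMinus_single (k : ℤ) (c : ℂ) :
    piMinus (Finsupp.single k c) = if k < 0 then Finsupp.single k c else 0 := by
  rw [piMinus, Finsupp.lsum_single]
  by_cases h : k < 0 <;> simp only [h, if_true, if_false, Finsupp.lsingle_apply,
    LinearMap.zero_apply]

lemma chain (j m n k : ℤ) :
    ((piMinus ∘ₗ rho j m ∘ₗ piPlus ∘ₗ rho j n) (Finsupp.single k 1)) k =
      if 0 ≤ k + n ∧ m + n = 0 ∧ k < 0 then
        ((k : ℂ) + (j : ℂ) * ((n : ℂ) + 1)) * (((k : ℂ) + n) + (j : ℂ) * ((m : ℂ) + 1))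
      else 0 := by
  rw [LinearMap.comp_apply, LinearMap.comp_apply, LinearMap.comp_apply, rho_single,
    map_smul, piPlus_single]
  by_cases h1 : 0 ≤ k + n
  · rw [if_pos h1, map_smul, rho_single, map_smul, map_smul, piMinus_single]
    by_cases h2 : k + n + m < 0
    · rw [if_pos h2]
      by_cases h3 : m + n = 0
      · have hk : k < 0 := by omega
        have he : k + n + m = k := by omega
        rw [if_pos ⟨h1, h3, hk⟩, he]
        simp only [Finsupp.smul_apply, Finsupp.single_eq_same, smul_eq_mul, mul_one]
        push_cast
        ring
      · rw [if_neg (by tauto)]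
        simp only [Finsupp.smul_apply, smul_eq_mul]
        rw [Finsupp.single_apply, if_neg (by omega)]
        ring
    · rw [if_neg h2, if_neg (by omega)]
      simp only [smul_zero, Finsupp.coe_zero, Pi.zero_apply]
  · rw [if_neg h1, if_neg (by tauto)]
    simp only [map_smul, smul_zero, map_zero, Finsupp.coe_zero, Pi.zero_apply]

lemma etaSummand_eq (j m n k : ℤ) :
    etaSummand (rho j m) (rho j n) k =
      if k < 0 ∧ m + n = 0 then
        (if 0 ≤ k + n then
          ((k : ℂ) + (j : ℂ) * ((n : ℂ) + 1)) * (((k : ℂ) + n) + (j : ℂ) * ((m : ℂ) + 1))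
         else 0) -
        (if 0 ≤ k + m then
          ((k : ℂ) + (j : ℂ) * ((m : ℂ) + 1)) * (((k : ℂ) + m) + (j : ℂ) * ((n : ℂ) + 1))
         else 0)
      else 0 := by
  rw [etaSummand, chain j m n k, chain j n m k]
  split_ifs <;> first | (exfalso; omega) | ring1

lemma sum_Ico_quad (a b : ℂ) : ∀ M : ℕ,
    (∑ k ∈ Finset.Ico (-(M : ℤ)) 0, (((k : ℂ) + a) * ((k : ℂ) + b))) =
      (M : ℂ) * ((M : ℂ) + 1) * (2 * (M : ℂ) + 1) / 6
        - (a + b) * ((M : ℂ) * ((M : ℂ) + 1) / 2) + a * b * (M : ℂ)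
  | 0 => by norm_num
  | (M + 1) => by
    have hset : Finset.Ico (-((M + 1 : ℕ) : ℤ)) 0
        = insert (-((M : ℤ) + 1)) (Finset.Ico (-(M : ℤ)) 0) := by
      ext x
      simp only [Finset.mem_Ico, Finset.mem_insert]
      push_cast
      omega
    have hnm : -((M : ℤ) + 1) ∉ Finset.Ico (-(M : ℤ)) 0 := by
      simp only [Finset.mem_Ico]
      omega
    rw [hset, Finset.sum_insert hnm, sum_Ico_quad a b M]
    push_cast
    ring

lemma support_subset (j m n : ℤ) :
    Function.support (etaSummand (rho j m) (rho j n))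
      ⊆ ↑(Finset.Ico (-(m.natAbs : ℤ)) 0) := by
  intro k hk
  simp only [Function.mem_support] at hk
  simp only [Finset.coe_Ico, Set.mem_Ico]
  by_contra hc
  apply hk
  rw [etaSummand_eq]
  split_ifs <;> first | (exfalso; omega) | ring1

lemma eta_sum_closed (j m n : ℤ) (hmn : m + n = 0) :
    (∑ k ∈ Finset.Ico (-(m.natAbs : ℤ)) 0, etaSummand (rho j m) (rho j n) k)
      = (6 * (j : ℂ) ^ 2 - 6 * (j : ℂ) + 1) * ((m : ℂ) ^ 3 - (m : ℂ)) / 6 := by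
  have hnC : (n : ℂ) = -(m : ℂ) := by
    have : n = -m := by omega
    rw [this]; push_cast; ring
  rcases le_or_gt 0 m with hm | hm
  · have hM : (m.natAbs : ℤ) = m := by omega
    have hMc : ((m.natAbs : ℕ) : ℂ) = (m : ℂ) := by
      rw [← Int.cast_natCast (R := ℂ), hM]
    have hcong : ∀ k ∈ Finset.Ico (-(m.natAbs : ℤ)) 0,
        etaSummand (rho j m) (rho j n) k =
          -(((k : ℂ) + ((j : ℂ) * ((m : ℂ) + 1)))
            * ((k : ℂ) + ((m : ℂ) + (j : ℂ) * ((n : ℂ) + 1)))) := by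
      intro k hk
      simp only [Finset.mem_Ico] at hk
      rw [etaSummand_eq, if_pos ⟨hk.2, hmn⟩, if_neg (by omega), if_pos (by omega)]
      ring
    rw [Finset.sum_congr rfl hcong, Finset.sum_neg_distrib, sum_Ico_quad, hMc, hnC]
    ring
  · have hM : (m.natAbs : ℤ) = -m := by omega
    have hMc : ((m.natAbs : ℕ) : ℂ) = -(m : ℂ) := by
      rw [← Int.cast_natCast (R := ℂ), hM, Int.cast_neg]
    have hcong : ∀ k ∈ Finset.Ico (-(m.natAbs : ℤ)) 0,
        etaSummand (rho j m) (rho j n) k =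
          (((k : ℂ) + ((j : ℂ) * ((n : ℂ) + 1)))
            * ((k : ℂ) + ((n : ℂ) + (j : ℂ) * ((m : ℂ) + 1)))) := by
      intro k hk
      simp only [Finset.mem_Ico] at hk
      rw [etaSummand_eq, if_pos ⟨hk.2, hmn⟩, if_pos (by omega), if_neg (by omega)]
      ring
    rw [Finset.sum_congr rfl hcong, sum_Ico_quad, hMc, hnC]
    ring

/-- Pullback of the Japanese cocycle along the intermediate-series representations:
for all integers `j, m, n`, the sums defining `η` on the operators `ρ_j(L_m)`, `ρ_j(L_n)`
(and on `ρ_1(L_m)`, `ρ_1(L_n)`) are finitely supported, and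
`η(ρ_j(L_m), ρ_j(L_n)) = (6j² − 6j + 1) · η(ρ_1(L_m), ρ_1(L_n))`. -/
theorem eta_rho_pullback (j m n : ℤ) :
    (Function.support (etaSummand (rho j m) (rho j n))).Finite ∧
    (Function.support (etaSummand (rho 1 m) (rho 1 n))).Finite ∧
    eta (rho j m) (rho j n) =
      ((6 * j ^ 2 - 6 * j + 1 : ℤ) : ℂ) * eta (rho 1 m) (rho 1 n) := by
  refine ⟨Set.Finite.subset (Finset.finite_toSet _) (support_subset j m n),
    Set.Finite.subset (Finset.finite_toSet _) (support_subset 1 m n), ?_⟩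
  rw [eta, eta, finsum_eq_sum_of_support_subset _ (support_subset j m n),
    finsum_eq_sum_of_support_subset _ (support_subset 1 m n)]
  by_cases hmn : m + n = 0
  · rw [eta_sum_closed j m n hmn, eta_sum_closed 1 m n hmn]
    push_cast
    ring
  · rw [Finset.sum_eq_zero, Finset.sum_eq_zero, mul_zero]
    · intro k _
      rw [etaSummand_eq, if_neg (by tauto)]
    · intro k _
      rw [etaSummand_eq, if_neg (by tauto)]
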